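/- There exists a continuous linear automorphism T : ℓ∞/c₀ → ℓ∞/c₀ (a bijective bounded linear operator with bounded inverse) which is liftable, i.e., there exists a bounded linear operator R : ℓ∞ → ℓ∞ with Q ∘ R = T ∘ Q, but such that no lifting of T is given by a c₀-matrix: every bounded linear operator R : ℓ∞ → ℓ∞ with Q ∘ R = T ∘ Q fails to be given by a c₀-matrix. -/

import Mathlib

open Filter Topology

noncomputable section

/-- The Banach space `ℓ∞` of bounded real sequences with the sup norm. -/
abbrev ellInfty : Type := BoundedContinuousFunction ℕ ℝ

/-- `c₀`, the subspace of `ℓ∞` of sequences converging to `0`. -/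
def czero : Submodule ℝ ellInfty where
  carrier := {f | Tendsto (⇑f) atTop (𝓝 (0 : ℝ))}
  add_mem' := by
    intro a b ha hb
    have h := ha.add hb
    rw [add_zero] at h
    show Tendsto _ _ _
    exact h
  zero_mem' := by
    show Tendsto _ _ _
    simp only [BoundedContinuousFunction.coe_zero]
    exact tendsto_const_nhds
  smul_mem' := by intro c f hf; simpa using hf.const_mul c

/-- The quotient Banach space `ℓ∞/c₀`; `czero.mkQ : ℓ∞ → ℓ∞/c₀` is the quotient map. -/
abbrev ellInftyModCzero : Type := ellInfty ⧸ czero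

/-- A bounded operator `T` on `ℓ∞/c₀` is *locally null* if for every infinite `A ⊆ ℕ`
there is an infinite `A₁ ⊆ A` such that `T (Q f) = 0` for every `f ∈ ℓ∞` vanishing
outside of `A₁`. -/
def LocallyNull (T : ellInftyModCzero →L[ℝ] ellInftyModCzero) : Prop :=
  ∀ A : Set ℕ, A.Infinite → ∃ A₁ ⊆ A, A₁.Infinite ∧
    ∀ f : ellInfty, (∀ n ∉ A₁, f n = 0) → T (czero.mkQ f) = 0

/-- `R : ℓ∞ → ℓ∞` is given by the `c₀`-matrix `b`: the rows of `b` are absolutely summable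
with uniformly bounded `ℓ₁`-norms, the columns of `b` converge to `0`, and `R` acts by
matrix multiplication by `b`. -/
structure IsC0Matrix (R : ellInfty →L[ℝ] ellInfty) (b : ℕ → ℕ → ℝ) : Prop where
  rows_summable : ∀ i, Summable fun j => |b i j|
  rows_bounded : ∃ C : ℝ, ∀ i, (∑' j, |b i j|) ≤ C
  cols_vanish : ∀ j, Tendsto (fun i => b i j) atTop (𝓝 (0 : ℝ))
  matrix_repr : ∀ f : ellInfty, ∀ i, R f i = ∑' j, b i j * f j

namespace S14

/-! ### An ultrafilter concentrated on the odd numbers -/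

def u : Ultrafilter ℕ := (Filter.hyperfilter ℕ).map (fun n => 2 * n + 1)

lemma u_le_atTop : (u : Filter ℕ) ≤ atTop := by
  rw [u, Ultrafilter.coe_map]
  have h1 : Tendsto (fun n : ℕ => 2 * n + 1) atTop atTop :=
    tendsto_atTop_mono (fun n => by simp only [id_eq]; omega) tendsto_id
  exact (Filter.map_mono Nat.hyperfilter_le_atTop).trans h1

lemma odds_mem_u : {n : ℕ | ¬ Even n} ∈ u := by
  rw [u]
  rw [Ultrafilter.mem_map]
  have : (fun n : ℕ => 2 * n + 1) ⁻¹' {n : ℕ | ¬ Even n} = Set.univ := by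
    ext n; simp [Set.mem_preimage, Nat.even_add_one, parity_simps]
  rw [this]
  exact Filter.univ_mem

/-! ### The limit along `u` as a functional on `ℓ∞` -/

lemma exists_limU (f : ellInfty) : ∃ x : ℝ, Tendsto ⇑f ↑u (𝓝 x) := by
  have hle : ↑(u.map ⇑f) ≤ 𝓟 (Set.Icc (-‖f‖) ‖f‖) := by
    rw [Ultrafilter.coe_map, Filter.le_principal_iff, Filter.mem_map]
    have : ⇑f ⁻¹' Set.Icc (-‖f‖) ‖f‖ = Set.univ := by
      ext n
      simp [Set.mem_preimage, Set.mem_Icc, abs_le.mp (f.norm_coe_le_norm n)]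
    rw [this]; exact Filter.univ_mem
  obtain ⟨x, -, hx⟩ := (isCompact_Icc (a := -‖f‖) (b := ‖f‖)).ultrafilter_le_nhds (u.map ⇑f) hle
  exact ⟨x, hx⟩

def limU (f : ellInfty) : ℝ := (exists_limU f).choose

lemma tendsto_limU (f : ellInfty) : Tendsto ⇑f ↑u (𝓝 (limU f)) := (exists_limU f).choose_spec

lemma limU_eq {f : ellInfty} {x : ℝ} (h : Tendsto ⇑f ↑u (𝓝 x)) : limU f = x :=
  tendsto_nhds_unique (tendsto_limU f) h

lemma limU_add (f g : ellInfty) : limU (f + g) = limU f + limU g :=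
  limU_eq (by rw [BoundedContinuousFunction.coe_add]; exact (tendsto_limU f).add (tendsto_limU g))

lemma limU_smul (c : ℝ) (f : ellInfty) : limU (c • f) = c * limU f :=
  limU_eq (by simpa using (tendsto_limU f).const_mul c)

lemma abs_limU_le (f : ellInfty) : |limU f| ≤ ‖f‖ :=
  le_of_tendsto (tendsto_limU f).abs (Filter.Eventually.of_forall fun n =>
    f.norm_coe_le_norm n)

lemma limU_zero_of_czero {f : ellInfty} (hf : f ∈ czero) : limU f = 0 :=
  limU_eq (Tendsto.mono_left hf u_le_atTop)

lemma limU_sub (f g : ellInfty) : limU (f - g) = limU f - limU g := by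
  have h1 := limU_add (f - g) g
  simp only [sub_add_cancel] at h1
  linarith

/-! ### Indicator functions -/

def ind (S : Set ℕ) : ellInfty :=
  BoundedContinuousFunction.ofNormedAddCommGroup (S.indicator 1)
    continuous_of_discreteTopology 1 (fun n => by
      by_cases h : n ∈ S
      · simp [Set.indicator_of_mem h]
      · simp [Set.indicator_of_notMem h])

lemma ind_of_mem {S : Set ℕ} {n : ℕ} (h : n ∈ S) : ind S n = 1 := by
  simp [ind, Set.indicator_of_mem h]

lemma ind_of_not_mem {S : Set ℕ} {n : ℕ} (h : n ∉ S) : ind S n = 0 := by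
  simp [ind, Set.indicator_of_notMem h]

lemma abs_ind_le (S : Set ℕ) (n : ℕ) : |ind S n| ≤ 1 := by
  by_cases h : n ∈ S
  · rw [ind_of_mem h]; norm_num
  · rw [ind_of_not_mem h]; norm_num

lemma limU_ind_of_mem {S : Set ℕ} (hS : S ∈ u) : limU (ind S) = 1 := by
  refine limU_eq (tendsto_const_nhds.congr' ?_)
  filter_upwards [hS] with n hn
  rw [ind_of_mem hn]

/-- the indicator of the even numbers -/
def gB : ellInfty := ind {n : ℕ | Even n}

lemma limU_gB : limU gB = 0 := by
  refine limU_eq (tendsto_const_nhds.congr' ?_)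
  filter_upwards [odds_mem_u] with n hn
  rw [gB, ind_of_not_mem hn]

/-! ### The weird operator `W0` and the induced operator `V` on the quotient -/

def limULM : ellInfty →ₗ[ℝ] ℝ where
  toFun := limU
  map_add' := limU_add
  map_smul' := limU_smul

def W0 : ellInfty →L[ℝ] ellInfty :=
  (limULM.smulRight gB).mkContinuous ‖gB‖ (fun f => by
    simp only [LinearMap.smulRight_apply, limULM, LinearMap.coe_mk, AddHom.coe_mk]
    rw [norm_smul, Real.norm_eq_abs, mul_comm]
    exact mul_le_mul_of_nonneg_left (abs_limU_le f) (norm_nonneg gB))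

lemma W0_apply (f : ellInfty) : W0 f = limU f • gB := rfl

lemma W0_mem_czero_of_czero {f : ellInfty} (hf : f ∈ czero) : W0 f ∈ czero := by
  rw [W0_apply, limU_zero_of_czero hf, zero_smul]
  exact czero.zero_mem

def Vlin : ellInftyModCzero →ₗ[ℝ] ellInftyModCzero :=
  Submodule.liftQ czero (czero.mkQ ∘ₗ (W0 : ellInfty →ₗ[ℝ] ellInfty)) (by
    intro f hf
    simp only [LinearMap.mem_ker, LinearMap.comp_apply, Submodule.mkQ_apply,
      Submodule.Quotient.mk_eq_zero]
    exact W0_mem_czero_of_czero hf)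

lemma Vlin_mk (f : ellInfty) : Vlin (czero.mkQ f) = czero.mkQ (W0 f) := rfl

lemma abs_limU_le_quot (f : ellInfty) : |limU f| ≤ ‖czero.mkQ f‖ := by
  refine le_of_forall_pos_le_add (fun ε hε => ?_)
  obtain ⟨m, hm, hlt⟩ := Submodule.Quotient.norm_mk_lt (czero.mkQ f) hε
  have hsub : m - f ∈ czero := by
    rw [← Submodule.Quotient.eq]
    exact hm
  have heq : limU m = limU f := by
    have h2 := limU_sub m f
    rw [limU_zero_of_czero hsub] at h2
    linarith
  calc |limU f| = |limU m| := by rw [heq]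
    _ ≤ ‖m‖ := abs_limU_le m
    _ ≤ ‖czero.mkQ f‖ + ε := le_of_lt hlt

set_option maxHeartbeats 1000000 in
lemma Vlin_bound (x : ellInftyModCzero) : ‖Vlin x‖ ≤ ‖gB‖ * ‖x‖ := by
  obtain ⟨f, rfl⟩ := Submodule.Quotient.mk_surjective czero x
  show ‖Vlin (czero.mkQ f)‖ ≤ ‖gB‖ * ‖czero.mkQ f‖
  calc ‖Vlin (czero.mkQ f)‖ = ‖czero.mkQ (W0 f)‖ := by rw [Vlin_mk]
    _ ≤ ‖W0 f‖ := by exact Submodule.Quotient.norm_mk_le czero (W0 f)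
    _ ≤ |limU f| * ‖gB‖ := by
        rw [W0_apply]
        refine (BoundedContinuousFunction.norm_le
          (mul_nonneg (abs_nonneg _) (norm_nonneg _))).mpr (fun n => ?_)
        rw [BoundedContinuousFunction.coe_smul]
        calc ‖(limU f • gB n : ℝ)‖ = |limU f| * |gB n| := by
              rw [smul_eq_mul, Real.norm_eq_abs, abs_mul]
          _ ≤ |limU f| * ‖gB‖ :=
              mul_le_mul_of_nonneg_left (gB.norm_coe_le_norm n) (abs_nonneg _)
    _ ≤ ‖czero.mkQ f‖ * ‖gB‖ := mul_le_mul_of_nonneg_right (abs_limU_le_quot f) (norm_nonneg _)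
    _ = ‖gB‖ * ‖czero.mkQ f‖ := mul_comm _ _

def V : ellInftyModCzero →L[ℝ] ellInftyModCzero :=
  { toLinearMap := Vlin,
    cont := by exact AddMonoidHomClass.continuous_of_bound Vlin ‖gB‖ Vlin_bound }

lemma V_mk (f : ellInfty) : V (czero.mkQ f) = czero.mkQ (W0 f) := rfl

lemma V_V (x : ellInftyModCzero) : V (V x) = 0 := by
  obtain ⟨f, rfl⟩ := Submodule.Quotient.mk_surjective czero x
  rw [show Submodule.Quotient.mk f = czero.mkQ f from rfl, V_mk, V_mk, W0_apply, W0_apply,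
    limU_smul, limU_gB, mul_zero, zero_smul, map_zero]

def T : ellInftyModCzero ≃L[ℝ] ellInftyModCzero :=
  ContinuousLinearEquiv.equivOfInverse (ContinuousLinearMap.id ℝ _ + V)
    (ContinuousLinearMap.id ℝ _ - V)
    (fun x => by
      simp only [ContinuousLinearMap.add_apply, ContinuousLinearMap.sub_apply,
        ContinuousLinearMap.id_apply, map_add, V_V, add_zero]
      abel)
    (fun x => by
      simp only [ContinuousLinearMap.add_apply, ContinuousLinearMap.sub_apply,
        ContinuousLinearMap.id_apply, map_sub, V_V, sub_zero]
      abel)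

lemma T_mk (f : ellInfty) : T (czero.mkQ f) = czero.mkQ (f + W0 f) := by
  rw [show (T (czero.mkQ f) : ellInftyModCzero)
      = czero.mkQ f + V (czero.mkQ f) from rfl, V_mk, map_add]

end S14

namespace S14

/-! ### The gliding hump construction -/

lemma exists_humps (c : ℕ → ℕ → ℝ) (_hrow : ∀ i, Summable fun j => |c i j|)
    (hcol : ∀ j, Tendsto (fun i => c i j) atTop (𝓝 (0:ℝ))) :
    ∃ m idx : ℕ → ℕ, StrictMono m ∧ StrictMono idx ∧ (∀ k, Even (idx k)) ∧
      (∀ k, (∑ j ∈ Finset.range (m k), |c (idx k) j|) < 1/8) ∧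
      (∀ k, (∑' j, |c (idx k) (j + m (k+1))|) < 1/8) := by
  have Hidx : ∀ mk prev : ℕ, ∃ i, Even i ∧ prev < i ∧
      (∑ j ∈ Finset.range mk, |c i j|) < 1/8 := by
    intro mk prev
    have hs : Tendsto (fun i => ∑ j ∈ Finset.range mk, |c i j|) atTop (𝓝 0) := by
      have h0 : Tendsto (fun i => ∑ j ∈ Finset.range mk, |c i j|) atTop
          (𝓝 (∑ _j ∈ Finset.range mk, (0:ℝ))) :=
        tendsto_finset_sum _ (fun j _ => by simpa using (hcol j).abs)
      simpa using h0
    obtain ⟨N, hN⟩ := eventually_atTop.mp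
      (hs.eventually_lt_const (show (0:ℝ) < 1/8 by norm_num))
    exact ⟨2 * (N + prev + 1), ⟨N + prev + 1, by ring⟩, by omega, hN _ (by omega)⟩
  have Hm : ∀ i mprev : ℕ, ∃ m', mprev < m' ∧ (∑' j, |c i (j + m')|) < 1/8 := by
    intro i mprev
    have hs : Tendsto (fun N => ∑' j, |c i (j + N)|) atTop (𝓝 0) :=
      tendsto_sum_nat_add (fun j => |c i j|)
    obtain ⟨N, hN⟩ := eventually_atTop.mp
      (hs.eventually_lt_const (show (0:ℝ) < 1/8 by norm_num))
    exact ⟨N + mprev + 1, by omega, hN _ (by omega)⟩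
  let p : ℕ → ℕ × ℕ := fun k => Nat.rec (0, (Hidx 0 0).choose)
    (fun _ q => ((Hm q.2 q.1).choose, (Hidx (Hm q.2 q.1).choose q.2).choose)) k
  have hps : ∀ k, p (k+1) = ((Hm (p k).2 (p k).1).choose,
      (Hidx (Hm (p k).2 (p k).1).choose (p k).2).choose) := fun k => rfl
  have hp1 : ∀ k, (p (k+1)).1 = (Hm (p k).2 (p k).1).choose := fun k => by rw [hps k]
  have hp2 : ∀ k, (p (k+1)).2 = (Hidx (Hm (p k).2 (p k).1).choose (p k).2).choose :=
    fun k => by rw [hps k]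
  refine ⟨fun k => (p k).1, fun k => (p k).2, ?_, ?_, ?_, ?_, ?_⟩
  · refine strictMono_nat_of_lt_succ (fun k => ?_)
    show (p k).1 < (p (k+1)).1
    rw [hp1 k]
    exact (Hm (p k).2 (p k).1).choose_spec.1
  · refine strictMono_nat_of_lt_succ (fun k => ?_)
    show (p k).2 < (p (k+1)).2
    rw [hp2 k]
    exact (Hidx (Hm (p k).2 (p k).1).choose (p k).2).choose_spec.2.1
  · intro k
    show Even ((p k).2)
    cases k with
    | zero => exact (Hidx 0 0).choose_spec.1
    | succ k =>
      rw [hp2 k]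
      exact (Hidx (Hm (p k).2 (p k).1).choose (p k).2).choose_spec.1
  · intro k
    show (∑ j ∈ Finset.range ((p k).1), |c ((p k).2) j|) < 1/8
    cases k with
    | zero =>
      have h0 : (p 0).1 = 0 := rfl
      rw [h0]
      simp
    | succ k =>
      rw [hp1 k, hp2 k]
      exact (Hidx (Hm (p k).2 (p k).1).choose (p k).2).choose_spec.2.2
  · intro k
    show (∑' j, |c ((p k).2) (j + (p (k+1)).1)|) < 1/8
    rw [hp1 k]
    exact (Hm (p k).2 (p k).1).choose_spec.2

end S14

set_option maxHeartbeats 2000000 in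
/-- There is a continuous linear automorphism `T` of `ℓ∞/c₀` which is liftable to a bounded
operator on `ℓ∞`, but none of whose liftings is given by a `c₀`-matrix. -/
theorem statement14 :
    ∃ T : ellInftyModCzero ≃L[ℝ] ellInftyModCzero,
      (∃ R : ellInfty →L[ℝ] ellInfty,
        ∀ f : ellInfty, czero.mkQ (R f) = T (czero.mkQ f)) ∧
      (∀ R : ellInfty →L[ℝ] ellInfty,
        (∀ f : ellInfty, czero.mkQ (R f) = T (czero.mkQ f)) →
        ¬ ∃ b : ℕ → ℕ → ℝ, IsC0Matrix R b) := by
  classical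
  refine ⟨S14.T, ⟨ContinuousLinearMap.id ℝ ellInfty + S14.W0, fun f => ?_⟩, ?_⟩
  · rw [S14.T_mk]
    rfl
  · rintro R hR ⟨b, hb⟩
    -- the matrix of `R - I`
    set c : ℕ → ℕ → ℝ := fun i j => b i j - (if i = j then 1 else 0) with hc
    have hcdef : ∀ i j, c i j = b i j - (if i = j then 1 else 0) := fun _ _ => rfl
    have hcrow : ∀ i, Summable fun j => |c i j| := by
      intro i
      have hd : Summable fun j => (if i = j then (1:ℝ) else 0) :=
        summable_of_ne_finset_zero (s := {i}) (fun j hj =>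
          if_neg (fun h => hj (Finset.mem_singleton.mpr h.symm)))
      refine Summable.of_nonneg_of_le (fun j => abs_nonneg _) (fun j => ?_)
        ((hb.rows_summable i).add hd)
      rw [hcdef]
      refine le_trans (abs_sub _ _) ?_
      by_cases h : i = j <;> simp [h]
    have hccol : ∀ j, Tendsto (fun i => c i j) atTop (𝓝 (0:ℝ)) := by
      intro j
      have h2 : Tendsto (fun i => (if i = j then (1:ℝ) else 0)) atTop (𝓝 0) := by
        refine tendsto_const_nhds.congr' ?_
        filter_upwards [eventually_gt_atTop j] with i hi
        rw [if_neg (by omega)]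
      simpa using (hb.cols_vanish j).sub h2
    obtain ⟨m, idx, hm, hidx, heven, hhead, htail⟩ := S14.exists_humps c hcrow hccol
    set S : Set ℕ := {j | ∃ k, Even k ∧ m k ≤ j ∧ j < m (k+1)} with hS
    -- the generic contradiction
    have key : ∀ S' : Set ℕ, S' ∈ S14.u →
        (∀ K, ∃ k, K ≤ k ∧ ∀ j, m k ≤ j → j < m (k+1) → j ∉ S') → False := by
      intro S' hS' hblk
      set f := S14.ind S' with hf
      have hmem : R f - f - S14.W0 f ∈ czero := by
        have h1 : czero.mkQ (R f - f - S14.W0 f) = 0 := by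
          rw [map_sub, map_sub, hR f, S14.T_mk, map_add]
          abel
        rwa [Submodule.mkQ_apply, Submodule.Quotient.mk_eq_zero] at h1
      have hlim1 : S14.limU f = 1 := S14.limU_ind_of_mem hS'
      -- pointwise matrix representation of `R - I`
      have hRf : ∀ i, R f i - f i = ∑' j, c i j * f j := by
        intro i
        have h1 : Summable fun j => b i j * f j := by
          refine Summable.of_norm_bounded ((hb.rows_summable i).mul_right ‖f‖)
            (fun j => ?_)
          rw [Real.norm_eq_abs, abs_mul]
          exact mul_le_mul_of_nonneg_left (f.norm_coe_le_norm j) (abs_nonneg _)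
        have h2 : Summable fun j => (if i = j then (1:ℝ) else 0) * f j :=
          summable_of_ne_finset_zero (s := {i}) (fun j hj => by
            rw [if_neg (fun h => hj (Finset.mem_singleton.mpr h.symm)), zero_mul])
        have h3 : (∑' j, (if i = j then (1:ℝ) else 0) * f j) = f i := by
          rw [tsum_eq_single i (fun j hj => by
            rw [if_neg (fun h => hj h.symm), zero_mul])]
          rw [if_pos rfl, one_mul]
        calc R f i - f i
            = (∑' j, b i j * f j) - (∑' j, (if i = j then (1:ℝ) else 0) * f j) := by
              rw [hb.matrix_repr f i, h3]
          _ = ∑' j, (b i j * f j - (if i = j then (1:ℝ) else 0) * f j) :=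
              (Summable.tsum_sub h1 h2).symm
          _ = ∑' j, c i j * f j := tsum_congr (fun j => by rw [hcdef, sub_mul])
      -- the estimate along good blocks
      have hest : ∀ k, (∀ j, m k ≤ j → j < m (k+1) → j ∉ S') →
          |∑' j, c (idx k) j * f j| ≤ 1/4 := by
        intro k hk
        have habs : ∀ j, |c (idx k) j * f j| ≤ |c (idx k) j| := fun j => by
          rw [abs_mul]
          calc |c (idx k) j| * |f j| ≤ |c (idx k) j| * 1 :=
                mul_le_mul_of_nonneg_left (S14.abs_ind_le S' j) (abs_nonneg _)
            _ = |c (idx k) j| := mul_one _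
        have hfs : Summable fun j => |c (idx k) j * f j| :=
          Summable.of_nonneg_of_le (fun j => abs_nonneg _) habs (hcrow (idx k))
        have h1 : |∑' j, c (idx k) j * f j| ≤ ∑' j, |c (idx k) j * f j| := by
          have h0 := norm_tsum_le_tsum_norm (f := fun j => c (idx k) j * f j)
            (by simpa only [Real.norm_eq_abs] using hfs)
          simpa only [Real.norm_eq_abs] using h0
        have hsplit : (∑' j, |c (idx k) j * f j|)
            = (∑ j ∈ Finset.range (m (k+1)), |c (idx k) j * f j|)
              + ∑' j, |c (idx k) (j + m (k+1)) * f (j + m (k+1))| :=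
          (Summable.sum_add_tsum_nat_add _ hfs).symm
        have hmid : (∑ j ∈ Finset.range (m (k+1)), |c (idx k) j * f j|)
            ≤ ∑ j ∈ Finset.range (m k), |c (idx k) j| := by
          have hsub : Finset.range (m k) ⊆ Finset.range (m (k+1)) :=
            Finset.range_subset_range.mpr (le_of_lt (hm (lt_add_one k)))
          have hzero : ∀ j ∈ Finset.range (m (k+1)), j ∉ Finset.range (m k) →
              |c (idx k) j * f j| = 0 := by
            intro j hj1 hj2
            have hj3 : m k ≤ j := le_of_not_gt (fun h => hj2 (Finset.mem_range.mpr h))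
            have hj4 : j < m (k+1) := Finset.mem_range.mp hj1
            rw [hf, S14.ind_of_not_mem (hk j hj3 hj4), mul_zero, abs_zero]
          rw [← Finset.sum_subset hsub hzero]
          exact Finset.sum_le_sum (fun j _ => habs j)
        have htl : (∑' j, |c (idx k) (j + m (k+1)) * f (j + m (k+1))|)
            ≤ ∑' j, |c (idx k) (j + m (k+1))| :=
          Summable.tsum_le_tsum (fun j => habs _) ((summable_nat_add_iff _).mpr hfs)
            ((summable_nat_add_iff _).mpr (hcrow (idx k)))
        calc |∑' j, c (idx k) j * f j| ≤ ∑' j, |c (idx k) j * f j| := h1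
          _ = _ := hsplit
          _ ≤ (∑ j ∈ Finset.range (m k), |c (idx k) j|)
              + ∑' j, |c (idx k) (j + m (k+1))| := add_le_add hmid htl
          _ ≤ 1/8 + 1/8 := add_le_add (le_of_lt (hhead k)) (le_of_lt (htail k))
          _ = 1/4 := by norm_num
      -- the convergence along the chosen indices
      have htends : Tendsto (fun k => R f (idx k) - f (idx k)
          - S14.limU f * S14.gB (idx k)) atTop (𝓝 0) := by
        have h5 : Tendsto (⇑(R f - f - S14.W0 f)) atTop (𝓝 (0:ℝ)) := hmem
        have h6 : Tendsto (fun n => R f n - f n - S14.limU f * S14.gB n) atTop (𝓝 0) := by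
          refine h5.congr (fun n => ?_)
          simp [S14.W0_apply, smul_eq_mul]
        exact h6.comp (tendsto_atTop_mono (fun n => hidx.le_apply) tendsto_id)
      have hev : ∀ᶠ k in atTop,
          |R f (idx k) - f (idx k) - S14.limU f * S14.gB (idx k)| < 1/2 := by
        have h6 : Tendsto (fun k => |R f (idx k) - f (idx k)
            - S14.limU f * S14.gB (idx k)|) atTop (𝓝 0) := by
          simpa using htends.abs
        exact h6.eventually_lt_const (show (0:ℝ) < 1/2 by norm_num)
      obtain ⟨K, hK⟩ := eventually_atTop.mp hev
      obtain ⟨k, hkK, hkgood⟩ := hblk K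
      have h7 := hK k hkK
      have h8 : S14.gB (idx k) = 1 := S14.ind_of_mem (heven k)
      rw [hlim1, h8, mul_one] at h7
      have h9 := hest k hkgood
      have h10 : (∑' j, c (idx k) j * f j) ≤ 1/4 := le_trans (le_abs_self _) h9
      have h11 : R f (idx k) - f (idx k) = ∑' j, c (idx k) j * f j := hRf (idx k)
      rw [abs_lt] at h7
      linarith [h7.1, h7.2]
    -- apply the generic contradiction to `S` or its complement
    rcases S14.u.mem_or_compl_mem S with hSu | hSu
    · refine key S hSu (fun K => ⟨2*K+1, by omega, fun j hj1 hj2 hjS => ?_⟩)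
      obtain ⟨k', hk'even, hk'1, hk'2⟩ := hjS
      rcases lt_trichotomy k' (2*K+1) with h | h | h
      · exact absurd (le_trans (hm.monotone (by omega : k' + 1 ≤ 2*K+1)) hj1)
          (not_le.mpr hk'2)
      · rw [h] at hk'even
        exact absurd hk'even (by simp [parity_simps])
      · exact absurd (le_trans (hm.monotone (by omega : 2*K+1+1 ≤ k')) hk'1)
          (not_le.mpr hj2)
    · refine key Sᶜ hSu (fun K => ⟨2*K, by omega, fun j hj1 hj2 hjS => ?_⟩)
      exact hjS ⟨2*K, ⟨K, by ring⟩, hj1, hj2⟩
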